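/- Let (R, m, k) be a commutative Noetherian local ring and let I be an ideal of R of positive grade. If m·⋀²_R(I) = 0, then the antisymmetrization map ι : ⋀²_R(I) → I ⊗_R I, determined by x ∧ y ↦ x ⊗ y − y ⊗ x, is injective. -/

import Mathlib

open ExteriorAlgebra TensorProduct

/-- The wedge `a ∧ b` of two elements of `M`, as an element of the second exterior power
`⋀[R]^2 M` (realized in Mathlib as a submodule of the exterior algebra). -/
noncomputable def wedge {R M : Type*} [CommRing R] [AddCommGroup M] [Module R M] (a b : M) :
    ⋀[R]^2 M :=
  ⟨ιMulti R 2 ![a, b], ιMulti_range R 2 ⟨![a, b], rfl⟩⟩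

section Aux
variable {R M : Type*} [CommRing R] [AddCommGroup M] [Module R M]

lemma wedge_val (a b : M) :
    ((wedge a b : ⋀[R]^2 M) : ExteriorAlgebra R M)
      = ExteriorAlgebra.ι R a * ExteriorAlgebra.ι R b := by
  show ιMulti R 2 ![a, b] = _
  simp [ιMulti_succ_apply, Matrix.vecTail]

end Aux

section Aux2
variable {R M : Type*} [CommRing R] [AddCommGroup M] [Module R M]

/-- `wedge` as a bilinear map. -/
noncomputable def Wedge : M →ₗ[R] M →ₗ[R] ↥(⋀[R]^2 M) :=
  LinearMap.mk₂ R wedge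
    (fun a a' b => Subtype.ext (by simp [wedge_val, map_add, add_mul]))
    (fun r a b => Subtype.ext (by simp [wedge_val, map_smul, smul_mul_assoc]))
    (fun a b b' => Subtype.ext (by simp [wedge_val, map_add, mul_add]))
    (fun r a b => Subtype.ext (by simp [wedge_val, map_smul, mul_smul_comm]))

@[simp] lemma Wedge_apply (a b : M) : (Wedge a b : ↥(⋀[R]^2 M)) = wedge a b := rfl

lemma wedge_self (a : M) : (wedge a a : ↥(⋀[R]^2 M)) = 0 :=
  Subtype.ext (by simp [wedge_val, ι_sq_zero])

lemma ι_mul_ι_anticomm (a b : M) :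
    ExteriorAlgebra.ι R a * ExteriorAlgebra.ι R b
      = -(ExteriorAlgebra.ι R b * ExteriorAlgebra.ι R a) := by
  have h0 : (ExteriorAlgebra.ι R a + ExteriorAlgebra.ι R b)
      * (ExteriorAlgebra.ι R a + ExteriorAlgebra.ι R b) = 0 := by
    rw [← map_add]; exact ι_sq_zero _
  have ha := ι_sq_zero (R := R) a
  have hb := ι_sq_zero (R := R) b
  linear_combination (norm := noncomm_ring) h0 - ha - hb

lemma wedge_antisymm (a b : M) : (wedge b a : ↥(⋀[R]^2 M)) = - wedge a b := by
  apply Subtype.ext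
  rw [NegMemClass.coe_neg, wedge_val, wedge_val]
  rw [ι_mul_ι_anticomm]

end Aux2

section Aux3
variable {R M : Type*} [CommRing R] [AddCommGroup M] [Module R M]

lemma wedge_span (z : ↥(⋀[R]^2 M)) :
    z ∈ Submodule.span R (Set.range fun ab : M × M => (wedge ab.1 ab.2 : ↥(⋀[R]^2 M))) := by
  have hz : (z : ExteriorAlgebra R M) ∈
      Submodule.span R (Set.range (ιMulti R 2 (M := M))) := by
    rw [ιMulti_span_fixedDegree]; exact z.2
  have key : ∀ (u : ExteriorAlgebra R M),
      u ∈ Submodule.span R (Set.range (ιMulti R 2 (M := M))) →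
      ∀ (h : u ∈ ⋀[R]^2 M), (⟨u, h⟩ : ↥(⋀[R]^2 M)) ∈
        Submodule.span R (Set.range fun ab : M × M => (wedge ab.1 ab.2 : ↥(⋀[R]^2 M))) := by
    intro u hu
    induction hu using Submodule.span_induction with
    | mem x hx =>
      intro h
      obtain ⟨v, rfl⟩ := hx
      have : (⟨ιMulti R 2 v, h⟩ : ↥(⋀[R]^2 M)) = wedge (v 0) (v 1) := by
        apply Subtype.ext
        rw [wedge_val]
        show ιMulti R 2 v = _
        have hv : v = ![v 0, v 1] := by
          funext i; fin_cases i <;> rfl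
        rw [hv]
        simp [ιMulti_succ_apply, Matrix.vecTail]
      rw [this]
      exact Submodule.subset_span ⟨(v 0, v 1), rfl⟩
    | zero =>
      intro h
      have : (⟨0, h⟩ : ↥(⋀[R]^2 M)) = 0 := rfl
      rw [this]; exact Submodule.zero_mem _
    | add x y hx hy ihx ihy =>
      intro h
      have hxm : x ∈ ⋀[R]^2 M := by rw [← ιMulti_span_fixedDegree]; exact hx
      have hym : y ∈ ⋀[R]^2 M := by rw [← ιMulti_span_fixedDegree]; exact hy
      have : (⟨x + y, h⟩ : ↥(⋀[R]^2 M)) = ⟨x, hxm⟩ + ⟨y, hym⟩ := rfl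
      rw [this]
      exact Submodule.add_mem _ (ihx hxm) (ihy hym)
    | smul a x hx ihx =>
      intro h
      have hxm : x ∈ ⋀[R]^2 M := by rw [← ιMulti_span_fixedDegree]; exact hx
      have : (⟨a • x, h⟩ : ↥(⋀[R]^2 M)) = a • ⟨x, hxm⟩ := rfl
      rw [this]
      exact Submodule.smul_mem _ _ (ihx hxm)
  exact key z.1 hz z.2
end Aux3

set_option maxHeartbeats 1000000 in
set_option synthInstance.maxHeartbeats 400000 in
/-- Let `(R, m, k)` be a commutative Noetherian local ring and `I` an ideal of
positive grade.  If `m·⋀²_R(I) = 0`, then the antisymmetrization map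
`ι : ⋀²_R(I) → I ⊗_R I`, determined by `x ∧ y ↦ x ⊗ y − y ⊗ x`, is injective. -/
theorem antisymmetrization_injective {R : Type*} [CommRing R] [IsNoetherianRing R] [IsLocalRing R]
    (I : Ideal R)
    (hgrade : ∃ r ∈ I, r ∈ nonZeroDivisors R)
    (hkill : ∀ r ∈ IsLocalRing.maximalIdeal R, ∀ z : ⋀[R]^2 ↥I, r • z = 0)
    (ι : ↥(⋀[R]^2 ↥I) →ₗ[R] (↥I ⊗[R] ↥I))
    (hι : ∀ a b : ↥I, ι (wedge a b) = a ⊗ₜ[R] b - b ⊗ₜ[R] a) :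
    Function.Injective ι := by
  classical
  set m : Ideal R := IsLocalRing.maximalIdeal R with hmdef
  rw [← LinearMap.ker_eq_bot, LinearMap.ker_eq_bot']
  intro z hz
  letI : Field (R ⧸ m) := Ideal.Quotient.field m
  set V := (↥I ⧸ (m • ⊤ : Submodule R ↥I)) with hVdef
  let p : ↥I →ₗ[R] V := Submodule.mkQ _
  -- scalar compatibility lemmas
  have smul_V : ∀ (r : R) (v : V), r • v = Ideal.Quotient.mk m r • v := by
    intro r v
    obtain ⟨w, rfl⟩ := Submodule.Quotient.mk_surjective _ v
    rfl
  have smul_k : ∀ (r : R) (w : R ⧸ m), r • w = Ideal.Quotient.mk m r * w := by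
    intro r w
    obtain ⟨s, rfl⟩ := Ideal.Quotient.mk_surjective w
    rfl
  -- wedge vanishes when one argument is in m • ⊤
  have hw0 : ∀ a c : ↥I, a ∈ (m • ⊤ : Submodule R ↥I) → (wedge a c : ↥(⋀[R]^2 ↥I)) = 0 := by
    intro a c ha
    rw [← Wedge_apply]
    refine Submodule.smul_induction_on (p := fun a => (Wedge a) c = 0) ha ?_ ?_
    · intro r hr n _
      rw [map_smul, LinearMap.smul_apply]
      exact hkill r hr _
    · intro x y hx hy
      rw [map_add, LinearMap.add_apply, hx, hy, add_zero]
  -- basis of V over the residue field, lifted along the quotient maps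
  let b : Module.Basis _ (R ⧸ m) V := Module.Basis.ofVectorSpace (R ⧸ m) V
  have hxx' := fun i => Submodule.Quotient.mk_surjective (m • ⊤ : Submodule R ↥I) (b i)
  choose xx hxx using hxx'
  choose L hL using Ideal.Quotient.mk_surjective (I := m)
  -- approximation of an element of I by a combination of the lifted basis
  let A : ↥I → ↥I := fun a => (b.repr (p a)).sum fun i t => L t • xx i
  have hpA : ∀ a : ↥I, p (A a) = p a := by
    intro a
    show p ((b.repr (p a)).sum fun i t => L t • xx i) = p a
    rw [map_finsuppSum]
    have heq : ((b.repr (p a)).sum fun i t => p (L t • xx i))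
        = (b.repr (p a)).sum fun i t => t • (b i : V) := by
      apply Finsupp.sum_congr
      intro i _
      rw [map_smul]
      have : p (xx i) = b i := hxx i
      rw [this, smul_V (L (b.repr (p a) i)), hL]
    rw [heq, ← Finsupp.linearCombination_apply, Module.Basis.linearCombination_repr]
  have hAdiff : ∀ a : ↥I, a - A a ∈ (m • ⊤ : Submodule R ↥I) := by
    intro a
    rw [← Submodule.Quotient.eq]
    exact (hpA a).symm
  have hw0r : ∀ a c : ↥I, c ∈ (m • ⊤ : Submodule R ↥I) → (wedge a c : ↥(⋀[R]^2 ↥I)) = 0 := by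
    intro a c hc
    rw [show (wedge a c : ↥(⋀[R]^2 ↥I)) = - wedge c a from by rw [wedge_antisymm c a],
      hw0 c a hc, neg_zero]
  -- z is a combination of wedges of lifted basis vectors
  let W : (↑(Module.Basis.ofVectorSpaceIndex (R ⧸ m) V) × ↑(Module.Basis.ofVectorSpaceIndex (R ⧸ m) V)) →
      ↥(⋀[R]^2 ↥I) := fun q => wedge (xx q.1) (xx q.2)
  have key : ∀ a c : ↥I, (wedge (A a) (A c) : ↥(⋀[R]^2 ↥I)) ∈ Submodule.span R (Set.range W) := by
    intro a c
    rw [← Wedge_apply]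
    have e1 : (Wedge (A a)) (A c) = (b.repr (p a)).sum fun i t => L t • (Wedge (xx i) (A c) : ↥(⋀[R]^2 ↥I)) := by
      show (Wedge.flip (A c)) ((b.repr (p a)).sum fun i t => L t • xx i) = _
      rw [map_finsuppSum]
      exact Finsupp.sum_congr fun i _ => by rw [map_smul]; rfl
    rw [e1]
    apply Submodule.finsuppSum_mem
    intro i _
    apply Submodule.smul_mem
    have e2 : Wedge (xx i) (A c) = (b.repr (p c)).sum fun j s => L s • (Wedge (xx i) (xx j) : ↥(⋀[R]^2 ↥I)) := by
      show (Wedge (xx i)) ((b.repr (p c)).sum fun j s => L s • xx j) = _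
      rw [map_finsuppSum]
      exact Finsupp.sum_congr fun j _ => by rw [map_smul]
    rw [e2]
    apply Submodule.finsuppSum_mem
    intro j _
    apply Submodule.smul_mem
    rw [Wedge_apply]
    exact Submodule.subset_span ⟨(i, j), rfl⟩
  have hzspan : z ∈ Submodule.span R (Set.range W) := by
    have h1 := wedge_span z
    refine Submodule.span_le.mpr ?_ h1
    rintro _ ⟨⟨a, c⟩, rfl⟩
    show (wedge a c : ↥(⋀[R]^2 ↥I)) ∈ (Submodule.span R (Set.range W) : Set _)
    have e1 : (wedge a c : ↥(⋀[R]^2 ↥I)) = wedge (A a) (A c) := by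
      have z1 : (Wedge (a - A a)) c = (0 : ↥(⋀[R]^2 ↥I)) := by rw [Wedge_apply]; exact hw0 _ _ (hAdiff a)
      have z2 : (Wedge (A a)) (c - A c) = (0 : ↥(⋀[R]^2 ↥I)) := by rw [Wedge_apply]; exact hw0r _ _ (hAdiff c)
      rw [map_sub, LinearMap.sub_apply, sub_eq_zero] at z1
      rw [map_sub, sub_eq_zero] at z2
      rw [← Wedge_apply a c, ← Wedge_apply (A a) (A c), z1, z2]
    rw [e1]; exact key a c
  obtain ⟨c, hc⟩ := Finsupp.mem_span_range_iff_exists_finsupp.mp hzspan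
  -- hc : (c.sum fun q r => r • W q) = z
  -- Step: coefficients are symmetric modulo m
  have hsym : ∀ i0 j0, Ideal.Quotient.mk m (c (i0, j0)) = Ideal.Quotient.mk m (c (j0, i0)) := by
    intro i0 j0
    let B : ↥I →ₗ[R] ↥I →ₗ[R] (R ⧸ m) := LinearMap.mk₂ R
      (fun a d => b.repr (p a) i0 * b.repr (p d) j0)
      (fun a a' d => by
        beta_reduce; rw [map_add, map_add, Finsupp.add_apply, add_mul])
      (fun r a d => by
        beta_reduce
        rw [map_smul, smul_V, map_smul, Finsupp.smul_apply, smul_eq_mul, mul_assoc, smul_k])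
      (fun a d d' => by
        beta_reduce; rw [map_add, map_add, Finsupp.add_apply, mul_add])
      (fun r a d => by
        beta_reduce
        rw [map_smul, smul_V, map_smul, Finsupp.smul_apply, smul_eq_mul, smul_k, mul_left_comm])
    let g : (↥I ⊗[R] ↥I) →ₗ[R] (R ⧸ m) := TensorProduct.lift B
    have hB : ∀ i j, B (xx i) (xx j) = if (i, j) = (i0, j0) then 1 else 0 := by
      intro i j
      show b.repr (p (xx i)) i0 * b.repr (p (xx j)) j0 = _
      rw [show p (xx i) = b i from hxx i, show p (xx j) = b j from hxx j,
        b.repr_self, b.repr_self, Finsupp.single_apply, Finsupp.single_apply]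
      by_cases h1 : i = i0 <;> by_cases h2 : j = j0 <;>
        simp [h1, h2, Prod.ext_iff]
    have hgW : ∀ q, g (ι (W q)) =
        (if q = (i0, j0) then (1 : R ⧸ m) else 0) - (if q = (j0, i0) then 1 else 0) := by
      intro q
      show g (ι (wedge (xx q.1) (xx q.2))) = _
      rw [hι, map_sub]
      have t1 : g ((xx q.1) ⊗ₜ[R] (xx q.2)) = B (xx q.1) (xx q.2) := rfl
      have t2 : g ((xx q.2) ⊗ₜ[R] (xx q.1)) = B (xx q.2) (xx q.1) := rfl
      have hcond : ((q.2, q.1) = (i0, j0)) = (q = (j0, i0)) := by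
        apply propext
        constructor
        · intro h
          have h' := Prod.ext_iff.mp h
          exact Prod.ext_iff.mpr ⟨h'.2, h'.1⟩
        · intro h
          subst h
          rfl
      rw [t1, t2, hB, hB, show ((q.1, q.2) : _ × _) = q from rfl]
      simp only [hcond]
    have hone : ∀ q₀, (c.sum fun q r => if q = q₀ then r • (1 : R ⧸ m) else 0)
        = Ideal.Quotient.mk m (c q₀) := by
      intro q₀
      rw [Finsupp.sum_ite_eq' c q₀ fun _ r => r • (1 : R ⧸ m)]
      split_ifs with h
      · rw [smul_k, mul_one]
      · rw [Finsupp.notMem_support_iff.mp h, map_zero]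
    have hg : g (ι z) = Ideal.Quotient.mk m (c (i0, j0)) - Ideal.Quotient.mk m (c (j0, i0)) := by
      rw [← hc, map_finsuppSum, map_finsuppSum]
      have e : (c.sum fun q r => g (ι (r • W q))) = c.sum fun q r =>
          ((if q = (i0, j0) then r • (1 : R ⧸ m) else 0) -
            (if q = (j0, i0) then r • (1 : R ⧸ m) else 0)) := by
        apply Finsupp.sum_congr
        intro q _
        rw [map_smul, map_smul, hgW, smul_sub]
        congr 1 <;> · rw [smul_ite, smul_zero]
      rw [e, Finsupp.sum_sub, hone, hone]
    rw [hz, map_zero] at hg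
    exact sub_eq_zero.mp hg.symm
  -- Final step: the pairing involution kills z
  let s := c.support ∪ c.support.image Prod.swap
  have hzs : z = ∑ q ∈ s, c q • W q := by
    rw [← hc, Finsupp.sum]
    exact Finset.sum_subset Finset.subset_union_left
      (fun q _ hq => by rw [Finsupp.notMem_support_iff.mp hq, zero_smul])
  rw [hzs]
  refine Finset.sum_involution (fun q _ => Prod.swap q) ?_ ?_ ?_ ?_
  · rintro ⟨i, j⟩ _
    by_cases hij : i = j
    · subst hij
      have : W (i, i) = 0 := wedge_self _
      show c (i, i) • W (i, i) + c (Prod.swap (i, i)) • W (Prod.swap (i, i)) = 0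
      rw [show Prod.swap (i, i) = (i, i) from rfl, this, smul_zero, add_zero]
    · show c (i, j) • W (i, j) + c (j, i) • W (j, i) = 0
      have hW : W (j, i) = - W (i, j) := wedge_antisymm _ _
      rw [hW, smul_neg, ← sub_eq_add_neg, ← sub_smul (c (i, j)) (c (j, i)) (W (i, j))]
      exact hkill _ (Ideal.Quotient.eq.mp (hsym i j)) _
  · rintro ⟨i, j⟩ _ hne h
    have hij : i = j := by
      have := (Prod.ext_iff.mp h).1
      simpa using this.symm
    subst hij
    have : W (i, i) = 0 := wedge_self _
    exact hne (by rw [this, smul_zero])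
  · intro q hq
    rcases Finset.mem_union.mp hq with h | h
    · exact Finset.mem_union_right _ (Finset.mem_image.mpr ⟨q, h, rfl⟩)
    · obtain ⟨u, hu, rfl⟩ := Finset.mem_image.mp h
      show Prod.swap (Prod.swap u) ∈ s
      rw [Prod.swap_swap]
      exact Finset.mem_union_left _ hu
  · intro q _
    exact Prod.swap_swap q
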